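/- Suppose ω is a faithful state with density matrix ρ, h is self-adjoint with [ρ,h] = 0, T > 0, and T log Δ + H ≥ 0 on the entire GNS space (where log Δ = π_ℓ(log ρ) − π_r(log ρ) and H = π_ℓ(h) − π_r(h)). Then T log Δ + H = 0 and ρ = e^{−h/T}/tr(e^{−h/T}), i.e., ω is the Gibbs state of h at temperature T. -/

import Mathlib

open scoped Matrix ComplexOrder
open Matrix

private lemma std_ct {d : ℕ} (i j : Fin d) (c : ℂ) :
    (single i j c)ᴴ = single j i (star c) := by
  ext a b
  simp only [Matrix.conjTranspose_apply, Matrix.single, Matrix.of_apply]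
  by_cases h1 : j = a <;> by_cases h2 : i = b <;> simp [h1, h2, and_comm]

private lemma tr_aux {d : ℕ} (e : Fin d → ℂ) (M : Matrix (Fin d) (Fin d) ℂ) (j i : Fin d)
    (s : ℂ) :
    (Matrix.diagonal e * (Matrix.single j i s * M)).trace = e j * (s * M i j) := by
  simp only [Matrix.trace, Matrix.diag_apply, Matrix.diagonal_mul]
  rw [Finset.sum_eq_single j]
  · simp
  · intro k _ hk
    rw [Matrix.single_mul_apply_of_ne s j i k k hk, mul_zero]
  · intro hj; exact absurd (Finset.mem_univ j) hj

/-- Suppose `ω` is a faithful state with density matrix `ρ`, `h` is self-adjoint with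
`[ρ, h] = 0`, `T > 0`, and `T log Δ + H ≥ 0` on the entire GNS space, i.e.
`⟨v| T log Δ + H |v⟩ ≥ 0` for all `v ∈ A` in the GNS inner product `⟨a|b⟩ = tr(ρ a* b)`,
where `log Δ = π_ℓ(log ρ) − π_r(log ρ)` (with `log ρ = ℓ` the Hermitian logarithm of
`ρ`) and `H = π_ℓ(h) − π_r(h)`.  Then `T log Δ + H = 0` and
`ρ = e^{−h/T}/tr(e^{−h/T})`, i.e. `ω` is the Gibbs state of `h` at temperature `T`. -/
theorem stmt_17 {d : ℕ} (ρ h : Matrix (Fin d) (Fin d) ℂ)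
    (hρ : ρ.PosDef) (htr : ρ.trace = 1) (hh : h.IsHermitian)
    (hcomm : ρ * h = h * ρ)
    (ℓ : Matrix (Fin d) (Fin d) ℂ) (hℓ : ℓ.IsHermitian)
    (hexp : NormedSpace.exp ℓ = ρ)
    (T : ℝ) (hT : 0 < T)
    (hpos : ∀ v : Matrix (Fin d) (Fin d) ℂ,
      0 ≤ (ρ * (vᴴ * ((T : ℂ) • (ℓ * v - v * ℓ) + (h * v - v * hᴴ)))).trace) :
    (∀ v : Matrix (Fin d) (Fin d) ℂ,
      (T : ℂ) • (ℓ * v - v * ℓ) + (h * v - v * hᴴ) = 0) ∧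
    ρ = (NormedSpace.exp ((-(T : ℂ)⁻¹) • h)).trace⁻¹ •
      NormedSpace.exp ((-(T : ℂ)⁻¹) • h) := by
  rcases Nat.eq_zero_or_pos d with h0 | hd
  · subst h0
    simp [Matrix.trace] at htr
  set A : Matrix (Fin d) (Fin d) ℂ := (T : ℂ) • ℓ + h with hAdef
  have hhH : hᴴ = h := hh
  have key : ∀ v : Matrix (Fin d) (Fin d) ℂ,
      (T : ℂ) • (ℓ * v - v * ℓ) + (h * v - v * hᴴ) = A * v - v * A := by
    intro v
    simp only [hAdef, hhH, Matrix.add_mul, Matrix.mul_add, Matrix.smul_mul, Matrix.mul_smul,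
      smul_sub]
    abel
  have hpos' : ∀ v : Matrix (Fin d) (Fin d) ℂ,
      0 ≤ (ρ * (vᴴ * (A * v - v * A))).trace := by
    intro v; rw [← key v]; exact hpos v
  have hA : A.IsHermitian := by
    unfold Matrix.IsHermitian
    simp [hAdef, Matrix.conjTranspose_add, Matrix.conjTranspose_smul, hℓ.eq, hh.eq,
      Complex.star_def, Complex.conj_ofReal]
  have hH : ρ.IsHermitian := hρ.1
  set ev : Fin d → ℝ := hH.eigenvalues with hevdef
  have hev : ∀ i, 0 < ev i := fun i => hρ.eigenvalues_pos i
  set U : Matrix (Fin d) (Fin d) ℂ := (hH.eigenvectorUnitary : Matrix (Fin d) (Fin d) ℂ)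
    with hUdef
  set D : Matrix (Fin d) (Fin d) ℂ := Matrix.diagonal (fun k => ((ev k : ℝ) : ℂ)) with hDdef
  have hspec : ρ = U * D * star U := hH.spectral_theorem
  have hU1 : star U * U = 1 := Unitary.coe_star_mul_self _
  have hU2 : U * star U = 1 := Unitary.coe_mul_star_self _
  have cancel1 : ∀ M : Matrix (Fin d) (Fin d) ℂ, star U * (U * M) = M := by
    intro M; rw [← Matrix.mul_assoc, hU1, Matrix.one_mul]
  have cancel2 : ∀ M : Matrix (Fin d) (Fin d) ℂ, U * (star U * M) = M := by
    intro M; rw [← Matrix.mul_assoc, hU2, Matrix.one_mul]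
  set B : Matrix (Fin d) (Fin d) ℂ := star U * A * U with hBdef
  have hB : B.IsHermitian := by
    unfold Matrix.IsHermitian
    simp only [hBdef, Matrix.conjTranspose_mul, Matrix.star_eq_conjTranspose,
      Matrix.conjTranspose_conjTranspose, hA.eq, Matrix.mul_assoc]
  have key2 : ∀ x : Matrix (Fin d) (Fin d) ℂ,
      0 ≤ (D * (xᴴ * (B * x - x * B))).trace := by
    intro x
    have := hpos' (U * x * star U)
    have hv : ρ * ((U * x * star U)ᴴ * (A * (U * x * star U) - (U * x * star U) * A))
        = U * (D * (xᴴ * (B * x - x * B))) * star U := by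
      rw [hspec, hBdef]
      simp only [Matrix.conjTranspose_mul, Matrix.star_eq_conjTranspose,
        Matrix.conjTranspose_conjTranspose, Matrix.mul_sub, Matrix.sub_mul, Matrix.mul_assoc]
      simp only [← Matrix.star_eq_conjTranspose, cancel1, cancel2, hU2, hU1, Matrix.mul_one]
    rw [hv, Matrix.trace_mul_cycle, ← Matrix.mul_assoc, hU1, Matrix.one_mul] at this
    exact this
  -- the diagonal of B is real
  have hBreal : ∀ i, B i i = ((B i i).re : ℂ) := by
    intro i
    have := congrFun (congrFun hB.eq i) i
    rw [Matrix.conjTranspose_apply] at this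
    exact (Complex.conj_eq_iff_re.mp this).symm
  -- diagonal entries of B are all equal
  have hdiag : ∀ i j, B i i = B j j := by
    have step : ∀ i j : Fin d, 0 ≤ ev j * ((B i i).re - (B j j).re) := by
      intro i j
      have h1 := key2 (single i j 1)
      rw [std_ct, star_one] at h1
      rw [hDdef] at h1
      simp only [Matrix.mul_sub, Matrix.trace_sub] at h1
      rw [tr_aux, tr_aux] at h1
      simp only [Function.comp_apply, Matrix.mul_single_apply_same,
        Matrix.single_mul_apply_same, one_mul, mul_one] at h1
      rw [hBreal i, hBreal j] at h1
      have h2 : ((ev j * ((B i i).re - (B j j).re) : ℝ) : ℂ)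
          = ((ev j : ℝ) : ℂ) * ((B i i).re : ℂ)
            - ((ev j : ℝ) : ℂ) * ((B j j).re : ℂ) := by
        push_cast
        ring
      rw [← h2] at h1
      exact Complex.zero_le_real.mp h1
    intro i j
    have h1 := step i j
    have h2 := step j i
    rw [hBreal i, hBreal j]
    norm_cast
    nlinarith [hev i, hev j]
  -- off-diagonal entries of B vanish
  have hoff : ∀ i j, i ≠ j → B i j = 0 := by
    intro i j hij
    set c : ℂ := -(B i j) with hcdef
    have h1 := key2 (single i j c + single j j 1)
    rw [Matrix.conjTranspose_add, std_ct, std_ct, star_one] at h1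
    rw [hDdef] at h1
    simp only [Matrix.mul_sub, Matrix.mul_add, Matrix.add_mul, Matrix.trace_sub,
      Matrix.trace_add, Matrix.mul_assoc] at h1
    rw [tr_aux, tr_aux, tr_aux, tr_aux, tr_aux, tr_aux, tr_aux, tr_aux] at h1
    simp only [Matrix.mul_single_apply_same,
      Matrix.single_mul_apply_same, one_mul, mul_one,
      Matrix.single_mul_apply_of_ne _ _ _ _ _ hij,
      Matrix.single_mul_apply_of_ne _ _ _ _ _ (Ne.symm hij),
      mul_zero, sub_zero, add_zero] at h1
    have hBji : B j i = star (B i j) := by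
      have h2 := congrFun (congrFun hB.eq j) i
      rw [Matrix.conjTranspose_apply] at h2
      exact h2.symm
    have heq : (((ev j : ℝ) : ℂ) * (star c * (B i i * c)) + ((ev j : ℝ) : ℂ) * (B j i * c)
          + (((ev j : ℝ) : ℂ) * (star c * B i j) + ((ev j : ℝ) : ℂ) * B j j)
          - (((ev j : ℝ) : ℂ) * (star c * (c * B j j)) + (0 + ((ev j : ℝ) : ℂ) * B j j)))
        = ((-2 * ev j * Complex.normSq (B i j) : ℝ) : ℂ) := by
      rw [hdiag i j, hBji, hcdef]
      push_cast
      rw [← Complex.mul_conj]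
      simp only [Complex.star_def, map_neg]
      ring
    rw [heq] at h1
    have hr := Complex.zero_le_real.mp h1
    have hn : Complex.normSq (B i j) = 0 := by nlinarith [hev j, Complex.normSq_nonneg (B i j)]
    exact Complex.normSq_eq_zero.mp hn
  -- B is a scalar matrix
  set i0 : Fin d := ⟨0, hd⟩ with hi0
  set a : ℂ := B i0 i0 with hadef
  have hBa : B = a • (1 : Matrix (Fin d) (Fin d) ℂ) := by
    ext i j
    by_cases hij : i = j
    · subst hij
      simp only [Matrix.smul_apply, Matrix.one_apply_eq, smul_eq_mul, mul_one]
      exact hdiag i i0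
    · simp [Matrix.one_apply, hij, hoff i j hij]
  have hUB : U * B * star U = A := by
    rw [hBdef]
    simp only [Matrix.mul_assoc, hU2, Matrix.mul_one, cancel2]
  have hAa : A = a • (1 : Matrix (Fin d) (Fin d) ℂ) := by
    rw [← hUB, hBa]
    rw [Matrix.mul_smul, Matrix.smul_mul, Matrix.mul_one, hU2]
  have part1 : ∀ v : Matrix (Fin d) (Fin d) ℂ,
      (T : ℂ) • (ℓ * v - v * ℓ) + (h * v - v * hᴴ) = 0 := by
    intro v
    rw [key v, hAa, Matrix.smul_mul, Matrix.mul_smul, Matrix.one_mul, Matrix.mul_one, sub_self]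
  refine ⟨part1, ?_⟩
  -- now identify ρ with the Gibbs state
  have hTne : (T : ℂ) ≠ 0 := Complex.ofReal_ne_zero.mpr hT.ne'
  set b : ℂ := (T : ℂ)⁻¹ * a with hbdef
  set X : Matrix (Fin d) (Fin d) ℂ := (-(T : ℂ)⁻¹) • h with hXdef
  have hℓeq : ℓ = b • (1 : Matrix (Fin d) (Fin d) ℂ) + X := by
    have h3 : (T : ℂ) • ℓ = a • (1 : Matrix (Fin d) (Fin d) ℂ) - h := by
      rw [← hAa, hAdef]; abel
    have h4 : ℓ = (T : ℂ)⁻¹ • ((T : ℂ) • ℓ) := by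
      rw [smul_smul, inv_mul_cancel₀ hTne, one_smul]
    rw [h4, h3, smul_sub, smul_smul, hXdef, hbdef, neg_smul, sub_eq_add_neg]
  have hcom : Commute (b • (1 : Matrix (Fin d) (Fin d) ℂ)) X :=
    (Commute.one_left X).smul_left b
  have hsplit : NormedSpace.exp ℓ = NormedSpace.exp (b • (1 : Matrix (Fin d) (Fin d) ℂ))
      * NormedSpace.exp X := by
    rw [hℓeq]
    exact Matrix.exp_add_of_commute _ _ hcom
  have hexpb : NormedSpace.exp (b • (1 : Matrix (Fin d) (Fin d) ℂ))
      = NormedSpace.exp b • (1 : Matrix (Fin d) (Fin d) ℂ) := by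
    rw [Matrix.smul_one_eq_diagonal, Matrix.exp_diagonal, Pi.exp_def,
      ← Matrix.smul_one_eq_diagonal]
  have hρX : ρ = NormedSpace.exp b • NormedSpace.exp X := by
    rw [← hexp, hsplit, hexpb, Matrix.smul_mul, Matrix.one_mul]
  have hb0 : NormedSpace.exp b ≠ 0 := by
    rw [← Complex.exp_eq_exp_ℂ]; exact Complex.exp_ne_zero b
  have htX : (NormedSpace.exp X).trace = (NormedSpace.exp b)⁻¹ := by
    have h5 : NormedSpace.exp b * (NormedSpace.exp X).trace = 1 := by
      rw [← smul_eq_mul, ← Matrix.trace_smul, ← hρX]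
      exact htr
    field_simp at h5 ⊢
    linear_combination h5
  rw [htX, inv_inv]
  exact hρX
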